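/- If f(x) = Σ_{j=1}^{d} λ_j/(x − α_j) where λ_1, …, λ_d > 0 and α_1 < α_2 < ⋯ < α_d are real, then f can be written in the form f(x) = γ·∏_{j=1}^{d−1}(x − β_j) / ∏_{j=1}^{d}(x − α_j) for some γ > 0 and real numbers β_1, …, β_{d−1} that strictly interlace the α_j, i.e. α_1 < β_1 < α_2 < β_2 < ⋯ < β_{d−1} < α_d. -/

import Mathlib

open Polynomial Finset

private lemma exists_root_Ioo' (p : Polynomial ℝ) {a b : ℝ} (hab : a < b)
    (h : p.eval a * p.eval b < 0) : ∃ x ∈ Set.Ioo a b, p.eval x = 0 := by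
  have hc : ContinuousOn (fun x => p.eval x) (Set.Icc a b) := p.continuous.continuousOn
  rcases lt_or_gt_of_ne (show p.eval a ≠ 0 by rintro h0; simp [h0] at h) with ha | ha
  · have hb : 0 < p.eval b := by nlinarith
    obtain ⟨x, hx, hx0⟩ := intermediate_value_Ioo hab.le hc (Set.mem_Ioo.mpr ⟨ha, hb⟩)
    exact ⟨x, hx, hx0⟩
  · have hb : p.eval b < 0 := by nlinarith
    obtain ⟨x, hx, hx0⟩ := intermediate_value_Ioo' hab.le hc (Set.mem_Ioo.mpr ⟨hb, ha⟩)
    exact ⟨x, hx, hx0⟩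

theorem interlacing_lemma_converse (d : ℕ) (hd : 0 < d) (α lam : ℕ → ℝ)
    (hlam : ∀ j < d, 0 < lam j)
    (hα : ∀ j, j + 1 < d → α j < α (j + 1))
    (f : ℝ → ℝ)
    (hf : ∀ x, f x = ∑ j ∈ Finset.range d, lam j / (x - α j)) :
    ∃ γ : ℝ, 0 < γ ∧ ∃ β : ℕ → ℝ,
      (∀ j, j + 1 < d → α j < β j ∧ β j < α (j + 1)) ∧
      ∀ x, (∀ j < d, x ≠ α j) →
        f x = γ * (∏ j ∈ Finset.range (d - 1), (x - β j)) / ∏ j ∈ Finset.range d, (x - α j) := by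
  classical
  -- strict monotonicity of α on [0, d)
  have hmono : ∀ k, k < d → ∀ j, j < k → α j < α k := by
    intro k hk
    induction k with
    | zero => omega
    | succ n ih =>
      intro j hj
      have hn : α n < α (n + 1) := hα n hk
      rcases Nat.lt_succ_iff_lt_or_eq.mp hj with h | h
      · exact (ih (by omega) j h).trans hn
      · subst h; exact hn
  set P : Polynomial ℝ := ∑ j ∈ range d, C (lam j) * ∏ k ∈ (range d).erase j, (X - C (α k))
    with hP
  have hevalP : ∀ x, P.eval x = ∑ j ∈ range d, lam j * ∏ k ∈ (range d).erase j, (x - α k) := by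
    intro x; simp [hP, eval_finset_sum, eval_prod]
  -- f in terms of P
  have hprodne : ∀ x : ℝ, (∀ j < d, x ≠ α j) → ∏ j ∈ range d, (x - α j) ≠ 0 := by
    intro x hx
    refine Finset.prod_ne_zero_iff.mpr fun j hj => sub_ne_zero.mpr (hx j (mem_range.mp hj))
  have hfP : ∀ x : ℝ, (∀ j < d, x ≠ α j) →
      f x = P.eval x / ∏ j ∈ range d, (x - α j) := by
    intro x hx
    rw [hf x, hevalP x, eq_div_iff (hprodne x hx), Finset.sum_mul]
    refine Finset.sum_congr rfl fun j hj => ?_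
    rw [← Finset.mul_prod_erase (range d) _ hj]
    have : x - α j ≠ 0 := sub_ne_zero.mpr (hx j (mem_range.mp hj))
    field_simp
  -- sign of P at α i
  have hsign : ∀ i < d, 0 < (-1 : ℝ) ^ (d - 1 - i) * P.eval (α i) := by
    intro i hi
    have hev : P.eval (α i) = lam i * ∏ k ∈ (range d).erase i, (α i - α k) := by
      rw [hevalP]
      refine Finset.sum_eq_single i (fun j hj hji => ?_) (fun h => absurd (mem_range.mpr hi) h)
      have him : i ∈ (range d).erase j :=
        Finset.mem_erase.mpr ⟨fun h => hji h.symm, mem_range.mpr hi⟩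
      rw [Finset.prod_eq_zero him (by ring), mul_zero]
    have hsplit : (range d).erase i = range i ∪ Ico (i + 1) d := by
      ext k
      simp only [mem_erase, mem_range, mem_union, mem_Ico]
      omega
    have hdisj : Disjoint (range i) (Ico (i + 1) d) := by
      refine Finset.disjoint_left.mpr fun k hk hk' => ?_
      simp only [mem_range] at hk; simp only [mem_Ico] at hk'; omega
    have hcard : (Ico (i + 1) d).card = d - 1 - i := by
      rw [Nat.card_Ico]; omega
    rw [hev, hsplit, Finset.prod_union hdisj]
    have h1 : 0 < ∏ k ∈ range i, (α i - α k) :=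
      Finset.prod_pos fun k hk => sub_pos.mpr (hmono i hi k (mem_range.mp hk))
    have h2 : (-1 : ℝ) ^ (d - 1 - i) * ∏ k ∈ Ico (i + 1) d, (α i - α k)
        = ∏ k ∈ Ico (i + 1) d, (α k - α i) := by
      rw [← hcard, ← Finset.prod_const (-1 : ℝ), ← Finset.prod_mul_distrib]
      exact Finset.prod_congr rfl fun k _ => by ring
    have h3 : 0 < ∏ k ∈ Ico (i + 1) d, (α k - α i) := by
      refine Finset.prod_pos fun k hk => sub_pos.mpr ?_
      have := mem_Ico.mp hk
      exact hmono k this.2 i (by omega)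
    have := hlam i hi
    nlinarith [h1, h3, mul_pos this (mul_pos h1 h3)]
  -- roots between consecutive α's
  have hroot : ∀ i, ∃ b : ℝ, i + 1 < d →
      b ∈ Set.Ioo (α i) (α (i + 1)) ∧ P.eval b = 0 := by
    intro i
    by_cases hi : i + 1 < d
    · have s1 := hsign i (by omega)
      have s2 := hsign (i + 1) hi
      have hopp : P.eval (α i) * P.eval (α (i + 1)) < 0 := by
        have hd1 : d - 1 - i = (d - 1 - (i + 1)) + 1 := by omega
        rw [hd1, pow_succ] at s1
        have ht : ((-1 : ℝ) ^ (d - 1 - (i + 1))) ^ 2 = 1 := by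
          rw [← pow_mul, mul_comm, pow_mul]; norm_num
        nlinarith [mul_pos s1 s2, ht]
      obtain ⟨x, hx, hx0⟩ := exists_root_Ioo' P (hα i hi) hopp
      exact ⟨x, fun _ => ⟨hx, hx0⟩⟩
    · exact ⟨0, fun h => absurd h hi⟩
  choose β hβ using hroot
  set γ : ℝ := ∑ j ∈ range d, lam j with hγ
  have hγpos : 0 < γ := Finset.sum_pos (fun j hj => hlam j (mem_range.mp hj))
    (nonempty_range_iff.mpr (by omega))
  set Q : Polynomial ℝ := C γ * ∏ j ∈ range (d - 1), (X - C (β j)) with hQ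
  -- β's are distinct / ordered
  have hβord : ∀ i j, i < j → j + 1 < d → β i < β j := by
    intro i j hij hj
    have hi : i + 1 < d := by omega
    have h1 := (hβ i hi).1
    have h2 := (hβ j hj).1
    have : α (i + 1) ≤ α j := by
      rcases Nat.eq_or_lt_of_le (Nat.succ_le_of_lt hij) with h | h
      · exact (congrArg α h).le
      · exact (hmono j (by omega) (i + 1) h).le
    have := h1.2
    have := h2.1
    linarith [h1.2, h2.1]
  -- degree and leading coeff facts
  have hmonic : ∀ j, (∏ k ∈ (range d).erase j, (X - C (α k)) : Polynomial ℝ).Monic :=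
    fun j => monic_prod_of_monic _ _ fun k _ => monic_X_sub_C _
  have hdeg : ∀ j ∈ range d,
      ((∏ k ∈ (range d).erase j, (X - C (α k)) : Polynomial ℝ)).natDegree = d - 1 := by
    intro j hj
    rw [natDegree_prod_of_monic _ _ fun k _ => monic_X_sub_C _]
    simp [Finset.card_erase_of_mem hj]
  have hPdeg : P.natDegree ≤ d - 1 := by
    refine natDegree_sum_le_of_forall_le _ _ fun j hj => ?_
    exact le_trans (natDegree_C_mul_le _ _) (le_of_eq (hdeg j hj))
  have hPcoeff : P.coeff (d - 1) = γ := by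
    rw [hP, finset_sum_coeff, hγ]
    refine Finset.sum_congr rfl fun j hj => ?_
    rw [coeff_C_mul]
    have : (∏ k ∈ (range d).erase j, (X - C (α k)) : Polynomial ℝ).coeff (d - 1) = 1 := by
      have := (hmonic j).coeff_natDegree
      rwa [hdeg j hj] at this
    rw [this, mul_one]
  have hQmonic : (∏ j ∈ range (d - 1), (X - C (β j)) : Polynomial ℝ).Monic :=
    monic_prod_of_monic _ _ fun k _ => monic_X_sub_C _
  have hQdeg' : (∏ j ∈ range (d - 1), (X - C (β j)) : Polynomial ℝ).natDegree = d - 1 := by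
    rw [natDegree_prod_of_monic _ _ fun k _ => monic_X_sub_C _]
    simp
  have hQdeg : Q.natDegree ≤ d - 1 :=
    le_trans (natDegree_C_mul_le _ _) (le_of_eq hQdeg')
  have hQcoeff : Q.coeff (d - 1) = γ := by
    rw [hQ, coeff_C_mul]
    have := hQmonic.coeff_natDegree
    rw [hQdeg'] at this
    rw [this, mul_one]
  -- P = Q
  have hPQ : P = Q := by
    by_contra hne
    have hR : P - Q ≠ 0 := sub_ne_zero.mpr hne
    have hRdeg : (P - Q).natDegree ≤ d - 1 :=
      le_trans (natDegree_sub_le _ _) (sup_le hPdeg hQdeg)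
    have hRcoeff : (P - Q).coeff (d - 1) = 0 := by
      rw [coeff_sub, hPcoeff, hQcoeff, sub_self]
    have hRlt : (P - Q).natDegree < d - 1 := by
      rcases lt_or_eq_of_le hRdeg with h | h
      · exact h
      · exact absurd (leadingCoeff_eq_zero.mp (by rw [leadingCoeff, h, hRcoeff])) hR
    have hscard : ((range (d - 1)).image β).card = d - 1 := by
      rw [Finset.card_image_of_injOn, card_range]
      intro i hi j hj hij
      by_contra hne'
      rcases lt_or_gt_of_ne hne' with h | h
      · exact absurd hij (ne_of_lt (hβord i j h (by have := mem_range.mp hj; omega)))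
      · exact absurd hij.symm (ne_of_lt (hβord j i h (by have := mem_range.mp hi; omega)))
    refine hR (eq_zero_of_natDegree_lt_card_of_eval_eq_zero' _ ((range (d - 1)).image β)
      (fun x hx => ?_) (by rw [hscard]; exact hRlt))
    obtain ⟨j, hj, rfl⟩ := Finset.mem_image.mp hx
    have hjd : j + 1 < d := by have := mem_range.mp hj; omega
    have hQ0 : Q.eval (β j) = 0 := by
      rw [hQ, eval_mul, eval_prod]
      rw [Finset.prod_eq_zero hj (by simp)]
      ring
    rw [eval_sub, (hβ j hjd).2, hQ0, sub_self]
  refine ⟨γ, hγpos, β, fun j hj => ⟨(hβ j hj).1.1, (hβ j hj).1.2⟩, fun x hx => ?_⟩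
  rw [hfP x hx, hPQ, hQ, eval_mul, eval_prod, eval_C]
  simp
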